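/- Let q ∈ ℕ, d ∈ {1,2,4}, and for a partition λ ∈ ℕ^q (λ₁ ≥ ⋯ ≥ λ_q ≥ 0) define (μ)_λ = ∏_{j=1}^q (μ - (d/2)(j-1))_{λ_j}. Then for all μ > d(q - 1/2), one has |1 - μ^{|λ|}/(μ)_λ| ≤ dq · 2^{dq(q-1)/2} · |λ|²/μ. -/
import Mathlib

open Finset Polynomial


lemma asc_ratio_le_min (μ a : ℝ) (b m : ℕ) (hμ : 0 < μ) (h2a : μ < 2 * a)
    (hb : μ ≤ a + b) :
    μ ^ m ≤ 2 ^ (min m b) * (ascPochhammer ℝ m).eval a := by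
  have ha : 0 < a := by linarith
  induction m with
  | zero => simp
  | succ m ih =>
    have hP : 0 < (ascPochhammer ℝ m).eval a := ascPochhammer_pos m a ha
    have hm0 : (0:ℝ) ≤ m := Nat.cast_nonneg m
    have ham : 0 < a + m := by linarith
    rw [pow_succ, ascPochhammer_succ_eval]
    rcases lt_or_ge m b with h | h
    · have hmin : min (m+1) b = min m b + 1 := by omega
      have h2 : μ ≤ 2 * (a + m) := by linarith
      calc μ ^ m * μ ≤ (2 ^ (min m b) * (ascPochhammer ℝ m).eval a) * (2 * (a + m)) :=
            mul_le_mul ih h2 (le_of_lt hμ) (by positivity)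
        _ = 2 ^ (min (m+1) b) * ((ascPochhammer ℝ m).eval a * (a + m)) := by
            rw [hmin]; ring
    · have hmin : min (m+1) b = min m b := by omega
      have hbm : (b:ℝ) ≤ m := Nat.cast_le.2 h
      have hμm : μ ≤ a + m := by linarith
      calc μ ^ m * μ ≤ (2 ^ (min m b) * (ascPochhammer ℝ m).eval a) * (a + m) :=
            mul_le_mul ih hμm (le_of_lt hμ) (by positivity)
        _ = 2 ^ (min (m+1) b) * ((ascPochhammer ℝ m).eval a * (a + m)) := by rw [hmin]; ring

lemma asc_ratio_le (μ a : ℝ) (b m : ℕ) (hμ : 0 < μ) (h2a : μ < 2 * a)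
    (hb : μ ≤ a + b) :
    μ ^ m ≤ 2 ^ b * (ascPochhammer ℝ m).eval a := by
  have ha : 0 < a := by linarith
  have hP : 0 < (ascPochhammer ℝ m).eval a := ascPochhammer_pos m a ha
  refine (asc_ratio_le_min μ a b m hμ h2a hb).trans ?_
  have : (2:ℝ) ^ (min m b) ≤ 2 ^ b := pow_le_pow_right₀ (by norm_num) (min_le_right m b)
  exact mul_le_mul_of_nonneg_right this (le_of_lt hP)

lemma asc_dev_le_min (μ a : ℝ) (b m : ℕ) (hμ : 0 < μ) (h2a : μ < 2 * a)
    (hb : μ ≤ a + b) :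
    |1 - μ ^ m / (ascPochhammer ℝ m).eval a| ≤
      2 ^ (min m b) * (2 / μ * ∑ i ∈ Finset.range m, |μ - (a + i)|) := by
  have ha : 0 < a := by linarith
  induction m with
  | zero => simp
  | succ m ih =>
    have hP : 0 < (ascPochhammer ℝ m).eval a := ascPochhammer_pos m a ha
    have hm0 : (0:ℝ) ≤ m := Nat.cast_nonneg m
    have ham : 0 < a + m := by linarith
    have hPne : (ascPochhammer ℝ m).eval a ≠ 0 := ne_of_gt hP
    have hamne : a + (m:ℝ) ≠ 0 := ne_of_gt ham
    rw [ascPochhammer_succ_eval, Finset.sum_range_succ]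
    have key : 1 - μ ^ (m+1) / ((ascPochhammer ℝ m).eval a * (a + m)) =
        (1 - μ ^ m / (ascPochhammer ℝ m).eval a) * (μ / (a + m)) + (1 - μ / (a + m)) := by
      field_simp
      ring
    rw [key]
    have habs : |(1 - μ ^ m / (ascPochhammer ℝ m).eval a) * (μ / (a + m)) + (1 - μ / (a + m))|
        ≤ |1 - μ ^ m / (ascPochhammer ℝ m).eval a| * (μ / (a + m)) + |1 - μ / (a + m)| := by
      refine (abs_add_le _ _).trans ?_
      rw [abs_mul, abs_of_pos (by positivity : (0:ℝ) < μ / (a + m))]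
    refine habs.trans ?_
    -- bound on the last factor deviation
    have hlast : |1 - μ / (a + m)| ≤ 2 / μ * |μ - (a + m)| := by
      have h1 : 1 - μ / (a + m) = (a + m - μ) / (a + m) := by field_simp
      rw [h1, abs_div, abs_of_pos ham, div_le_iff₀ ham, abs_sub_comm]
      have h2 : μ ≤ 2 * (a + m) := by linarith
      have habs0 : 0 ≤ |μ - (a + m)| := abs_nonneg _
      rw [div_mul_eq_mul_div, div_mul_eq_mul_div, le_div_iff₀ hμ]
      nlinarith [mul_le_mul_of_nonneg_left h2 habs0]
    have hfac : μ / (a + m) * 2 ^ (min m b) ≤ 2 ^ (min (m+1) b) := by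
      rcases lt_or_ge m b with h | h
      · have hmin : min (m+1) b = min m b + 1 := by omega
        have h2 : μ / (a + m) ≤ 2 := by rw [div_le_iff₀ ham]; linarith
        rw [hmin, pow_succ]
        calc μ / (a+m) * 2 ^ (min m b) ≤ 2 * 2 ^ (min m b) := by
              exact mul_le_mul_of_nonneg_right h2 (by positivity)
          _ = 2 ^ (min m b) * 2 := by ring
      · have hmin : min (m+1) b = min m b := by omega
        have hbm : (b:ℝ) ≤ m := Nat.cast_le.2 h
        have h1 : μ / (a + m) ≤ 1 := by rw [div_le_one ham]; linarith
        rw [hmin]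
        calc μ / (a+m) * 2 ^ (min m b) ≤ 1 * 2 ^ (min m b) :=
              mul_le_mul_of_nonneg_right h1 (by positivity)
          _ = 2 ^ (min m b) := by ring
    have hone : (1:ℝ) ≤ 2 ^ (min (m+1) b) := one_le_pow₀ (by norm_num : (1:ℝ) ≤ 2)
    have hS0 : 0 ≤ ∑ i ∈ Finset.range m, |μ - (a + i)| :=
      Finset.sum_nonneg fun i _ => abs_nonneg _
    have hx0 : 0 ≤ μ / (a + m) := by positivity
    have h2μ : 0 ≤ 2 / μ := by positivity
    calc |1 - μ ^ m / (ascPochhammer ℝ m).eval a| * (μ / (a + m)) + |1 - μ / (a + m)|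
        ≤ (2 ^ (min m b) * (2 / μ * ∑ i ∈ Finset.range m, |μ - (a + i)|)) * (μ / (a + m))
            + 2 / μ * |μ - (a + m)| := by
          refine add_le_add (mul_le_mul_of_nonneg_right ih hx0) hlast
      _ = (2 / μ * ∑ i ∈ Finset.range m, |μ - (a + i)|) * (μ / (a + m) * 2 ^ (min m b))
            + 2 / μ * |μ - (a + m)| := by ring
      _ ≤ (2 / μ * ∑ i ∈ Finset.range m, |μ - (a + i)|) * 2 ^ (min (m+1) b)
            + 2 / μ * |μ - (a + m)| * 2 ^ (min (m+1) b) := by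
          refine add_le_add (mul_le_mul_of_nonneg_left hfac (by positivity)) ?_
          nlinarith [abs_nonneg (μ - (a+m)), mul_nonneg h2μ (abs_nonneg (μ - (a+m)))]
      _ = 2 ^ (min (m+1) b) * (2 / μ * (∑ i ∈ Finset.range m, |μ - (a + i)| + |μ - (a + m)|)) := by
          ring

lemma asc_dev_le (μ a : ℝ) (b m : ℕ) (hμ : 0 < μ) (h2a : μ < 2 * a)
    (hb : μ ≤ a + b) :
    |1 - μ ^ m / (ascPochhammer ℝ m).eval a| ≤
      2 ^ b * (2 / μ * ∑ i ∈ Finset.range m, |μ - (a + i)|) := by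
  refine (asc_dev_le_min μ a b m hμ h2a hb).trans ?_
  have h1 : (2:ℝ) ^ (min m b) ≤ 2 ^ b := pow_le_pow_right₀ (by norm_num) (min_le_right m b)
  have h2 : 0 ≤ 2 / μ * ∑ i ∈ Finset.range m, |μ - (a + i)| := by
    have := Finset.sum_nonneg (fun i (_ : i ∈ Finset.range m) => abs_nonneg (μ - (a + i)))
    positivity
  exact mul_le_mul_of_nonneg_right h1 h2

lemma prod_dev_le {ι : Type*} (s : Finset ι) (f g : ι → ℝ)
    (hf : ∀ i ∈ s, 0 < f i) (hfg : ∀ i ∈ s, f i ≤ g i) (hg : ∀ i ∈ s, 1 ≤ g i) :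
    |1 - ∏ i ∈ s, f i| ≤ (∏ i ∈ s, g i) * ∑ i ∈ s, |1 - f i| / g i := by
  induction s using Finset.cons_induction with
  | empty => simp
  | cons a s ha ih =>
    have hfa : 0 < f a := hf a (mem_cons_self a s)
    have hga : 1 ≤ g a := hg a (mem_cons_self a s)
    have hga0 : 0 < g a := lt_of_lt_of_le one_pos hga
    have hf' : ∀ i ∈ s, 0 < f i := fun i hi => hf i (mem_cons_of_mem hi)
    have hfg' : ∀ i ∈ s, f i ≤ g i := fun i hi => hfg i (mem_cons_of_mem hi)
    have hg' : ∀ i ∈ s, 1 ≤ g i := fun i hi => hg i (mem_cons_of_mem hi)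
    have IH := ih hf' hfg' hg'
    rw [prod_cons, prod_cons, sum_cons]
    have hG1 : 1 ≤ ∏ i ∈ s, g i := by
      calc (1:ℝ) = ∏ _i ∈ s, 1 := by simp
        _ ≤ ∏ i ∈ s, g i := Finset.prod_le_prod (fun _ _ => zero_le_one) hg'
    have hG0 : (0:ℝ) < ∏ i ∈ s, g i := lt_of_lt_of_le one_pos hG1
    have hS0 : 0 ≤ ∑ i ∈ s, |1 - f i| / g i :=
      sum_nonneg fun i hi => div_nonneg (abs_nonneg _) (le_of_lt (lt_of_lt_of_le one_pos (hg' i hi)))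
    have h1 : |1 - f a * ∏ i ∈ s, f i| ≤ |1 - f a| + f a * |1 - ∏ i ∈ s, f i| := by
      have hid : 1 - f a * ∏ i ∈ s, f i = (1 - f a) + f a * (1 - ∏ i ∈ s, f i) := by ring
      rw [hid]
      refine (abs_add_le _ _).trans ?_
      rw [abs_mul, abs_of_pos hfa]
    refine h1.trans ?_
    have hcanc : g a * (|1 - f a| / g a) = |1 - f a| := by field_simp
    have hexp : (g a * ∏ i ∈ s, g i) * (|1 - f a| / g a + ∑ i ∈ s, |1 - f i| / g i)
        = (∏ i ∈ s, g i) * |1 - f a| + g a * ((∏ i ∈ s, g i) * ∑ i ∈ s, |1 - f i| / g i) := by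
      linear_combination (∏ i ∈ s, g i) * hcanc
    rw [hexp]
    have h2 : |1 - f a| ≤ (∏ i ∈ s, g i) * |1 - f a| := by
      nlinarith [abs_nonneg (1 - f a)]
    have h3 : f a * |1 - ∏ i ∈ s, f i| ≤ g a * ((∏ i ∈ s, g i) * ∑ i ∈ s, |1 - f i| / g i) := by
      calc f a * |1 - ∏ i ∈ s, f i| ≤ f a * ((∏ i ∈ s, g i) * ∑ i ∈ s, |1 - f i| / g i) :=
            mul_le_mul_of_nonneg_left IH (le_of_lt hfa)
        _ ≤ g a * ((∏ i ∈ s, g i) * ∑ i ∈ s, |1 - f i| / g i) :=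
            mul_le_mul_of_nonneg_right (hfg a (mem_cons_self a s)) (by positivity)
    linarith


noncomputable def genPochhammer (d q : ℕ) (μ : ℝ) (lam : Fin q → ℕ) : ℝ :=
  ∏ j : Fin q, (ascPochhammer ℝ (lam j)).eval (μ - (d : ℝ) / 2 * (j : ℕ))

theorem stmt_7 (d q : ℕ) (hd : d ∈ ({1, 2, 4} : Set ℕ)) (lam : Fin q → ℕ)
    (hlam : Antitone lam) (μ : ℝ) (hμ : (d : ℝ) * ((q : ℝ) - 1 / 2) < μ) :
    |1 - μ ^ (∑ j, lam j) / genPochhammer d q μ lam| ≤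
      (d : ℝ) * q * 2 ^ (d * q * (q - 1) / 2) * ((∑ j, lam j : ℕ) : ℝ) ^ 2 / μ := by
  have hd1 : 1 ≤ d := by
    simp only [Set.mem_insert_iff, Set.mem_singleton_iff] at hd
    rcases hd with h | h | h <;> omega
  rcases Nat.eq_zero_or_pos q with rfl | hq
  · simp [genPochhammer]
  have hdR : (1:ℝ) ≤ d := by exact_mod_cast hd1
  have hqR : (1:ℝ) ≤ q := by exact_mod_cast hq
  have hμ0 : (0:ℝ) < μ := by nlinarith [mul_nonneg (by linarith : (0:ℝ) ≤ (d:ℝ) - 1) (by linarith : (0:ℝ) ≤ (q:ℝ) - 1/2)]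
  set n := ∑ j, lam j with hn
  set f : Fin q → ℝ :=
    fun j => μ ^ lam j / (ascPochhammer ℝ (lam j)).eval (μ - (d:ℝ)/2 * ((j:ℕ):ℝ)) with hfdef
  set g : Fin q → ℝ := fun j => (2:ℝ) ^ (d * (j:ℕ)) with hgdef
  have hja : ∀ j : Fin q, ((j:ℕ):ℝ) ≤ (q:ℝ) - 1 := by
    intro j
    have h1 : (j:ℕ) + 1 ≤ q := j.isLt
    have h2 : ((j:ℕ):ℝ) + 1 ≤ (q:ℝ) := by exact_mod_cast h1
    linarith
  have h2a : ∀ j : Fin q, μ < 2 * (μ - (d:ℝ)/2 * ((j:ℕ):ℝ)) := by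
    intro j
    have h1 : (d:ℝ) * ((j:ℕ):ℝ) ≤ (d:ℝ) * ((q:ℝ) - 1) :=
      mul_le_mul_of_nonneg_left (hja j) (by linarith)
    nlinarith
  have hbj : ∀ j : Fin q, μ ≤ (μ - (d:ℝ)/2 * ((j:ℕ):ℝ)) + ((d * (j:ℕ) : ℕ):ℝ) := by
    intro j
    have h1 : (0:ℝ) ≤ (d:ℝ)/2 * ((j:ℕ):ℝ) := by positivity
    push_cast
    linarith
  have hapos : ∀ j : Fin q, 0 < μ - (d:ℝ)/2 * ((j:ℕ):ℝ) := fun j => by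
    have := h2a j; linarith
  have hPpos : ∀ j : Fin q, 0 < (ascPochhammer ℝ (lam j)).eval (μ - (d:ℝ)/2 * ((j:ℕ):ℝ)) :=
    fun j => ascPochhammer_pos _ _ (hapos j)
  have hgpos : ∀ j : Fin q, (0:ℝ) < g j := fun j => by positivity
  have hfpos : ∀ j ∈ univ, (0:ℝ) < f j := fun j _ => div_pos (by positivity) (hPpos j)
  have hgone : ∀ j ∈ univ, (1:ℝ) ≤ g j := fun j _ => one_le_pow₀ (by norm_num)
  have hfg : ∀ j ∈ univ, f j ≤ g j := by
    intro j _
    rw [hfdef]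
    simp only
    rw [div_le_iff₀ (hPpos j)]
    exact asc_ratio_le μ _ (d * (j:ℕ)) (lam j) hμ0 (h2a j) (hbj j)
  have key := prod_dev_le univ f g hfpos hfg hgone
  have hprodf : ∏ j, f j = μ ^ n / genPochhammer d q μ lam := by
    rw [hfdef, genPochhammer, Finset.prod_div_distrib, Finset.prod_pow_eq_pow_sum]
  have hsumb : ∑ j : Fin q, d * (j:ℕ) = d * q * (q-1) / 2 := by
    have h2 : 2 ∣ q * (q - 1) := by
      have : q * (q - 1) = (q-1) * ((q-1) + 1) := by
        rw [Nat.sub_add_cancel hq]; ring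
      rw [this]
      exact (Nat.even_mul_succ_self (q-1)).two_dvd
    rw [Fin.sum_univ_eq_sum_range (fun i => d * i) q, ← Finset.mul_sum,
      Finset.sum_range_id, mul_assoc, Nat.mul_div_assoc d h2]
  have hprodg : ∏ j, g j = (2:ℝ) ^ (d * q * (q-1) / 2) := by
    rw [hgdef]
    rw [Finset.prod_pow_eq_pow_sum, hsumb]
  -- per-j deviation bound divided by g j
  have hdevj : ∀ j : Fin q, |1 - f j| / g j ≤
      2/μ * ∑ i ∈ Finset.range (lam j), |μ - ((μ - (d:ℝ)/2 * ((j:ℕ):ℝ)) + i)| := by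
    intro j
    rw [div_le_iff₀ (hgpos j)]
    calc |1 - f j| ≤ (2:ℝ) ^ (d * (j:ℕ)) *
          (2/μ * ∑ i ∈ Finset.range (lam j), |μ - ((μ - (d:ℝ)/2 * ((j:ℕ):ℝ)) + i)|) :=
        asc_dev_le μ _ (d * (j:ℕ)) (lam j) hμ0 (h2a j) (hbj j)
      _ = (2/μ * ∑ i ∈ Finset.range (lam j), |μ - ((μ - (d:ℝ)/2 * ((j:ℕ):ℝ)) + i)|) * g j := by
        rw [hgdef]; ring
  -- bound each inner sum
  have hSj : ∀ j : Fin q, ∑ i ∈ Finset.range (lam j), |μ - ((μ - (d:ℝ)/2 * ((j:ℕ):ℝ)) + i)|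
      ≤ (lam j : ℝ) * ((d:ℝ) * ((q:ℝ)-1) / 2) + ∑ i ∈ Finset.range (lam j), (i:ℝ) := by
    intro j
    have hc : (0:ℝ) ≤ (d:ℝ)/2 * ((j:ℕ):ℝ) := by positivity
    have hcb : (d:ℝ)/2 * ((j:ℕ):ℝ) ≤ (d:ℝ) * ((q:ℝ)-1) / 2 := by
      have := mul_le_mul_of_nonneg_left (hja j) (by positivity : (0:ℝ) ≤ (d:ℝ)/2)
      linarith
    calc ∑ i ∈ Finset.range (lam j), |μ - ((μ - (d:ℝ)/2 * ((j:ℕ):ℝ)) + i)|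
        ≤ ∑ i ∈ Finset.range (lam j), ((d:ℝ) * ((q:ℝ)-1) / 2 + (i:ℝ)) := by
          refine Finset.sum_le_sum fun i _ => ?_
          have h1 : μ - ((μ - (d:ℝ)/2 * ((j:ℕ):ℝ)) + i) = (d:ℝ)/2 * ((j:ℕ):ℝ) - i := by ring
          rw [h1]
          refine (abs_sub _ _).trans ?_
          rw [abs_of_nonneg hc, abs_of_nonneg (Nat.cast_nonneg i)]
          linarith
      _ = (lam j : ℝ) * ((d:ℝ) * ((q:ℝ)-1) / 2) + ∑ i ∈ Finset.range (lam j), (i:ℝ) := by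
          rw [Finset.sum_add_distrib, Finset.sum_const, Finset.card_range, nsmul_eq_mul]
  -- Gauss
  have hgauss : ∀ m : ℕ, 2 * ∑ i ∈ Finset.range m, (i:ℝ) = ((m * (m-1) : ℕ) : ℝ) := by
    intro m
    rw [← Finset.sum_range_id_mul_two m]
    push_cast
    ring
  -- nat inequality
  have hnat1 : (∑ j, lam j * (lam j - 1)) + n ≤ n * n := by
    have h1 : ∀ x : ℕ, x * (x - 1) + x = x ^ 2 := by
      intro x
      cases x with
      | zero => rfl
      | succ k => simp [Nat.succ_sub_one]; ring
    calc (∑ j, lam j * (lam j - 1)) + n = ∑ j, (lam j * (lam j - 1) + lam j) := by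
          rw [hn, Finset.sum_add_distrib]
      _ = ∑ j, lam j ^ 2 := by simp [h1]
      _ ≤ (∑ j, lam j) ^ 2 := Finset.sum_sq_le_sq_sum_of_nonneg fun _ _ => Nat.zero_le _
      _ = n * n := by rw [← hn, sq]
  have hnat2 : n ≤ n * n := by
    rcases Nat.eq_zero_or_pos n with h | h
    · simp [h]
    · calc n = n * 1 := (mul_one n).symm
        _ ≤ n * n := Nat.mul_le_mul_left n h
  have hnat1R : (∑ j, ((lam j * (lam j - 1) : ℕ) : ℝ)) + (n:ℝ) ≤ (n:ℝ) * (n:ℝ) := by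
    exact_mod_cast hnat1
  have hnat2R : (n:ℝ) ≤ (n:ℝ) * (n:ℝ) := by exact_mod_cast hnat2
  -- total sum bound
  set SS : ℝ := ∑ j, ∑ i ∈ Finset.range (lam j), |μ - ((μ - (d:ℝ)/2 * ((j:ℕ):ℝ)) + i)| with hSSdef
  have hSS0 : 0 ≤ SS := Finset.sum_nonneg fun j _ => Finset.sum_nonneg fun i _ => abs_nonneg _
  have hSSbound : 2 * SS ≤ (d:ℝ) * q * (n:ℝ)^2 := by
    have h1 : SS ≤ (n:ℝ) * ((d:ℝ) * ((q:ℝ)-1) / 2) + ∑ j, ∑ i ∈ Finset.range (lam j), (i:ℝ) := by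
      rw [hSSdef]
      calc (∑ j, ∑ i ∈ Finset.range (lam j), |μ - ((μ - (d:ℝ)/2 * ((j:ℕ):ℝ)) + i)|)
          ≤ ∑ j, ((lam j : ℝ) * ((d:ℝ) * ((q:ℝ)-1) / 2) + ∑ i ∈ Finset.range (lam j), (i:ℝ)) :=
            Finset.sum_le_sum fun j _ => hSj j
        _ = (n:ℝ) * ((d:ℝ) * ((q:ℝ)-1) / 2) + ∑ j, ∑ i ∈ Finset.range (lam j), (i:ℝ) := by
            rw [Finset.sum_add_distrib, ← Finset.sum_mul, hn]
            push_cast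
            ring
    have h2 : 2 * ∑ j, ∑ i ∈ Finset.range (lam j), (i:ℝ) = ∑ j, ((lam j * (lam j - 1) : ℕ) : ℝ) := by
      rw [Finset.mul_sum]
      exact Finset.sum_congr rfl fun j _ => hgauss (lam j)
    have h3 : (d:ℝ) * ((q:ℝ)-1) * (n:ℝ) ≤ (d:ℝ) * ((q:ℝ)-1) * ((n:ℝ) * (n:ℝ)) :=
      mul_le_mul_of_nonneg_left hnat2R (by nlinarith)
    have h4 : (n:ℝ) * (n:ℝ) ≤ (d:ℝ) * ((n:ℝ) * (n:ℝ)) := by nlinarith [mul_nonneg (Nat.cast_nonneg n (α:=ℝ)) (Nat.cast_nonneg n (α:=ℝ))]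
    have h5 : (d:ℝ) * q * (n:ℝ)^2 = (d:ℝ)*((q:ℝ)-1)*((n:ℝ)*(n:ℝ)) + (d:ℝ)*((n:ℝ)*(n:ℝ)) := by ring
    have hn0 : (0:ℝ) ≤ (n:ℝ) := Nat.cast_nonneg n
    linarith [h1, h2, h3, h4, hnat1R, h5, hn0]
  -- finish
  calc |1 - μ ^ n / genPochhammer d q μ lam| = |1 - ∏ j, f j| := by rw [hprodf]
    _ ≤ (∏ j, g j) * ∑ j, |1 - f j| / g j := key
    _ ≤ (∏ j, g j) * (2/μ * SS) := by
        refine mul_le_mul_of_nonneg_left ?_ (le_of_lt (by positivity : (0:ℝ) < ∏ j, g j))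
        rw [hSSdef, Finset.mul_sum]
        exact Finset.sum_le_sum fun j _ => hdevj j
    _ = (2:ℝ) ^ (d * q * (q-1) / 2) * (2 * SS / μ) := by rw [hprodg]; ring
    _ ≤ (2:ℝ) ^ (d * q * (q-1) / 2) * ((d:ℝ) * q * (n:ℝ)^2 / μ) := by
        refine mul_le_mul_of_nonneg_left ?_ (by positivity)
        exact (div_le_div_iff_of_pos_right hμ0).mpr hSSbound
    _ = (d:ℝ) * q * 2 ^ (d * q * (q-1) / 2) * (n:ℝ)^2 / μ := by ring
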